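/- Let ψ_wa: Y → ℝ^q and ψ_a: Y^{H,R} → ℝ^p be bounded maps, C: ℝ^p → ℝ^q a bounded linear operator, and (X,Y) ~ D a random pair with Y taking values in a finite set Y. Define g*(x) = E[ψ_wa(Y) | X = x]. For any measurable g: X → ℝ^q define the decoded predictor (h_g(x), r_g(x)) = argmin_{(y_h,y_r) ∈ Y^{H,R}} ⟨g(x), C ψ_a(y_h, y_r)⟩ and the risk R(h,r) = E_{(x,y)~D} ⟨ψ_wa(y), C ψ_a(h(x), r(x))⟩. Then for every measurable g, R(h_g, r_g) − R(h_{g*}, r_{g*}) ≤ 2 c_ℓ √(L(g) − L(g*)), where L(g) = E_{(x,y)~D} ‖ψ_wa(y) − g(x)‖² and c_ℓ = ‖C‖_op · max_{(y_h,y_r) ∈ Y^{H,R}} ‖ψ_a(y_h,y_r)‖. -/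

import Mathlib

open MeasureTheory Finset
open scoped RealInnerProductSpace

lemma integral_le_sqrt_integral_sq {X : Type*} [MeasurableSpace X] (μ : Measure X)
    [IsProbabilityMeasure μ] (f : X → ℝ)
    (hf : Integrable f μ) (hf2 : Integrable (fun x => f x ^ 2) μ) :
    ∫ x, f x ∂μ ≤ Real.sqrt (∫ x, f x ^ 2 ∂μ) := by
  set I := ∫ x, f x ^ 2 ∂μ with hI
  have hI0 : 0 ≤ I := integral_nonneg fun x => sq_nonneg _
  have key : ∀ t : ℝ, 0 < t → ∫ x, f x ∂μ ≤ t / 2 + I / (2 * t) := by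
    intro t ht
    have h1 : ∀ x, f x ≤ t / 2 + f x ^ 2 / (2 * t) := by
      intro x
      have h3 : 2 * t * f x ≤ t * t + f x ^ 2 := by nlinarith [sq_nonneg (f x - t)]
      calc f x = (2 * t * f x) / (2 * t) := by field_simp
        _ ≤ (t * t + f x ^ 2) / (2 * t) := by gcongr
        _ = t / 2 + f x ^ 2 / (2 * t) := by field_simp
    calc ∫ x, f x ∂μ ≤ ∫ x, (t / 2 + f x ^ 2 / (2 * t)) ∂μ := by
          refine integral_mono hf ?_ h1
          exact (integrable_const _).add (hf2.div_const _)
      _ = t / 2 + I / (2 * t) := by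
          rw [integral_add (integrable_const _) (hf2.div_const _), integral_const,
            integral_div, probReal_univ]
          simp [hI]
  refine le_of_forall_pos_le_add fun ε hε => ?_
  have hs : 0 ≤ Real.sqrt I := Real.sqrt_nonneg _
  have ht : 0 < Real.sqrt I + ε := by linarith
  have h4 : I / (2 * (Real.sqrt I + ε)) ≤ Real.sqrt I / 2 := by
    rw [div_le_div_iff₀ (by positivity) (by norm_num)]
    nlinarith [Real.mul_self_sqrt hI0]
  have h5 := key _ ht
  linarith

theorem stmt3
    {X : Type*} [MeasurableSpace X] (μ : Measure X) [IsProbabilityMeasure μ]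
    {S YHR : Type*} [Fintype S] [Fintype YHR] [Nonempty S] [Nonempty YHR]
    {p q : ℕ}
    (ψwa : S → EuclideanSpace ℝ (Fin q)) (ψa : YHR → EuclideanSpace ℝ (Fin p))
    (C : EuclideanSpace ℝ (Fin p) →L[ℝ] EuclideanSpace ℝ (Fin q))
    (P : X → S → ℝ) (hP0 : ∀ x s, 0 ≤ P x s) (hP1 : ∀ x, ∑ s, P x s = 1)
    (g gs : X → EuclideanSpace ℝ (Fin q))
    (hgs : ∀ x, gs x = ∑ s, P x s • ψwa s)
    (decg decgs : X → YHR)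
    (hdecg : ∀ x z, ⟪g x, C (ψa (decg x))⟫ ≤ ⟪g x, C (ψa z)⟫)
    (hdecgs : ∀ x z, ⟪gs x, C (ψa (decgs x))⟫ ≤ ⟪gs x, C (ψa z)⟫)
    (R : (X → YHR) → ℝ)
    (hR : ∀ f, R f = ∫ x, ∑ s, P x s * ⟪ψwa s, C (ψa (f x))⟫ ∂μ)
    (L : (X → EuclideanSpace ℝ (Fin q)) → ℝ)
    (hL : ∀ g', L g' = ∫ x, ∑ s, P x s * ‖ψwa s - g' x‖^2 ∂μ)
    (hint1 : Integrable (fun x => ∑ s, P x s * ⟪ψwa s, C (ψa (decg x))⟫) μ)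
    (hint2 : Integrable (fun x => ∑ s, P x s * ⟪ψwa s, C (ψa (decgs x))⟫) μ)
    (hint3 : Integrable (fun x => ∑ s, P x s * ‖ψwa s - g x‖^2) μ)
    (hint4 : Integrable (fun x => ∑ s, P x s * ‖ψwa s - gs x‖^2) μ)
    (cl : ℝ)
    (hcl : cl = ‖C‖ * (Finset.univ.sup' Finset.univ_nonempty fun z : YHR => ‖ψa z‖)) :
    R decg - R decgs ≤ 2 * cl * Real.sqrt (L g - L gs) := by
  -- the pointwise deviation
  set d : X → EuclideanSpace ℝ (Fin q) := fun x => gs x - g x with hd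
  -- sums against P are inner products with gs
  have hsum : ∀ x (v : EuclideanSpace ℝ (Fin q)),
      ∑ s, P x s * ⟪ψwa s, v⟫ = ⟪gs x, v⟫ := by
    intro x v
    rw [hgs x, sum_inner]
    exact Finset.sum_congr rfl fun s _ => (real_inner_smul_left _ _ _).symm
  -- norm of C ψa z bounded by cl
  have hcl0 : ∀ z : YHR, ‖C (ψa z)‖ ≤ cl := by
    intro z
    rw [hcl]
    calc ‖C (ψa z)‖ ≤ ‖C‖ * ‖ψa z‖ := C.le_opNorm _
      _ ≤ _ := by
          refine mul_le_mul_of_nonneg_left ?_ (norm_nonneg C)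
          exact Finset.le_sup' (fun z : YHR => ‖ψa z‖) (Finset.mem_univ z)
  have hclnn : 0 ≤ cl := le_trans (norm_nonneg _) (hcl0 (Classical.arbitrary YHR))
  -- key pointwise excess-risk bound
  have key1 : ∀ x, (∑ s, P x s * ⟪ψwa s, C (ψa (decg x))⟫)
      - (∑ s, P x s * ⟪ψwa s, C (ψa (decgs x))⟫) ≤ 2 * cl * ‖d x‖ := by
    intro x
    rw [hsum, hsum]
    have h1 : ⟪gs x, C (ψa (decg x))⟫ - ⟪gs x, C (ψa (decgs x))⟫
        = ⟪d x, C (ψa (decg x)) - C (ψa (decgs x))⟫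
          + ⟪g x, C (ψa (decg x)) - C (ψa (decgs x))⟫ := by
      simp only [hd, inner_sub_left, inner_sub_right]; ring
    have h2 : ⟪g x, C (ψa (decg x)) - C (ψa (decgs x))⟫ ≤ 0 := by
      rw [inner_sub_right]
      linarith [hdecg x (decgs x)]
    have h3 : ⟪d x, C (ψa (decg x)) - C (ψa (decgs x))⟫ ≤ ‖d x‖ * (2 * cl) := by
      calc ⟪d x, C (ψa (decg x)) - C (ψa (decgs x))⟫
          ≤ ‖d x‖ * ‖C (ψa (decg x)) - C (ψa (decgs x))‖ := real_inner_le_norm _ _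
        _ ≤ ‖d x‖ * (2 * cl) := by
            refine mul_le_mul_of_nonneg_left ?_ (norm_nonneg _)
            calc ‖C (ψa (decg x)) - C (ψa (decgs x))‖
                ≤ ‖C (ψa (decg x))‖ + ‖C (ψa (decgs x))‖ := norm_sub_le _ _
              _ ≤ 2 * cl := by linarith [hcl0 (decg x), hcl0 (decgs x)]
    linarith [h3, h2, h1.le, h1.ge]
  -- bias-variance identity
  have key2 : ∀ x, (∑ s, P x s * ‖ψwa s - g x‖^2)
      - (∑ s, P x s * ‖ψwa s - gs x‖^2) = ‖d x‖^2 := by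
    intro x
    have expand : ∀ s, ‖ψwa s - g x‖^2
        = ‖ψwa s - gs x‖^2 + 2 * ⟪ψwa s - gs x, d x⟫ + ‖d x‖^2 := by
      intro s
      have : ψwa s - g x = (ψwa s - gs x) + d x := by simp only [hd]; abel
      rw [this, @norm_add_sq_real]
    have cross : ∑ s, P x s * ⟪ψwa s - gs x, d x⟫ = 0 := by
      have : ∑ s, P x s * ⟪ψwa s - gs x, d x⟫
          = ⟪∑ s, P x s • (ψwa s - gs x), d x⟫ := by
        rw [sum_inner]
        exact Finset.sum_congr rfl fun s _ => (real_inner_smul_left _ _ _).symm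
      rw [this]
      have hz : ∑ s, P x s • (ψwa s - gs x) = 0 := by
        simp only [smul_sub, Finset.sum_sub_distrib, ← Finset.sum_smul, hP1, hgs]
        simp
      rw [hz, inner_zero_left]
    calc (∑ s, P x s * ‖ψwa s - g x‖^2) - (∑ s, P x s * ‖ψwa s - gs x‖^2)
        = ∑ s, (P x s * ‖ψwa s - g x‖^2 - P x s * ‖ψwa s - gs x‖^2) := by
          rw [Finset.sum_sub_distrib]
      _ = ∑ s, (2 * (P x s * ⟪ψwa s - gs x, d x⟫) + P x s * ‖d x‖^2) := by
          refine Finset.sum_congr rfl fun s _ => ?_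
          rw [expand s]; ring
      _ = ‖d x‖^2 := by
          rw [Finset.sum_add_distrib, ← Finset.mul_sum, cross, ← Finset.sum_mul, hP1]
          ring
  -- integrability of ‖d‖² and ‖d‖
  have hD2 : Integrable (fun x => ‖d x‖^2) μ :=
    (hint3.sub hint4).congr (ae_of_all _ key2)
  have hD1 : Integrable (fun x => ‖d x‖) μ := by
    have hm : AEStronglyMeasurable (fun x => ‖d x‖) μ := by
      have : (fun x => ‖d x‖) = fun x => Real.sqrt (‖d x‖^2) := by
        funext x; rw [Real.sqrt_sq (norm_nonneg _)]
      rw [this]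
      exact Real.continuous_sqrt.comp_aestronglyMeasurable hD2.aestronglyMeasurable
    refine ((integrable_const (1 : ℝ)).add hD2).mono hm (ae_of_all _ fun x => ?_)
    have h0 : (0:ℝ) ≤ 1 + ‖d x‖^2 := by positivity
    simp only [Pi.add_apply]
    rw [Real.norm_of_nonneg (norm_nonneg _), Real.norm_of_nonneg h0]
    nlinarith [sq_nonneg (‖d x‖ - 1)]
  -- final chain
  have hLdiff : L g - L gs = ∫ x, ‖d x‖^2 ∂μ := by
    rw [hL, hL, ← integral_sub hint3 hint4]
    exact integral_congr_ae (ae_of_all _ key2)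
  calc R decg - R decgs
      = ∫ x, ((∑ s, P x s * ⟪ψwa s, C (ψa (decg x))⟫)
          - (∑ s, P x s * ⟪ψwa s, C (ψa (decgs x))⟫)) ∂μ := by
        rw [hR, hR, integral_sub hint1 hint2]
    _ ≤ ∫ x, 2 * cl * ‖d x‖ ∂μ :=
        integral_mono (hint1.sub hint2) (hD1.const_mul _) key1
    _ = 2 * cl * ∫ x, ‖d x‖ ∂μ := integral_const_mul _ _
    _ ≤ 2 * cl * Real.sqrt (∫ x, ‖d x‖^2 ∂μ) := by
        refine mul_le_mul_of_nonneg_left ?_ (by linarith)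
        exact integral_le_sqrt_integral_sq μ _ hD1 hD2
    _ = 2 * cl * Real.sqrt (L g - L gs) := by rw [hLdiff]
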